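/- Let b ∈ (−1, 0) and define f : ℝ² → ℝ by f(η) = (1/2)(|η| + b η₂)², whose gradient for η ≠ 0 is ∇f(η) = (|η| + b η₂)(η/|η| + b e₂). Let u(x₁, x₂) = x₂ / (x₁² + x₂²) on ℝ²₊ = {(x₁,x₂) : x₂ > 0}. Then the vector field x ↦ ∇f(∇u(x)) has strictly positive divergence at every point of ℝ²₊: for all x with x₂ > 0, ∑_{i=1}^2 ∂/∂x_i [ (∇f)_i(∇u(x)) ] > 0. (Hence u is a strict subsolution of the equation ∇·(∇f(∇u)) = 0 in ℝ²₊.) -/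

import Mathlib

set_option maxHeartbeats 1000000


open Real MeasureTheory

noncomputable section

/-- The divergence of a vector field on `ℝ²`, i.e. the trace of its Jacobian. -/
def vdiv (V : EuclideanSpace ℝ (Fin 2) → EuclideanSpace ℝ (Fin 2))
    (x : EuclideanSpace ℝ (Fin 2)) : ℝ :=
  LinearMap.trace ℝ (EuclideanSpace ℝ (Fin 2)) (fderiv ℝ V x).toLinearMap

abbrev EE := EuclideanSpace ℝ (Fin 2)
abbrev ee (i : Fin 2) : EE := EuclideanSpace.single i (1:ℝ)
abbrev phi (i : Fin 2) : EE →L[ℝ] ℝ := EuclideanSpace.proj i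

@[simp] lemma phi_apply (i : Fin 2) (v : EE) : phi i v = v i := rfl

lemma traceEE (A : EE →ₗ[ℝ] EE) :
    LinearMap.trace ℝ EE A = A (ee 0) 0 + A (ee 1) 1 := by
  rw [LinearMap.trace_eq_matrix_trace ℝ (PiLp.basisFun 2 ℝ (Fin 2))]
  rw [Matrix.trace]
  rw [Fin.sum_univ_two]
  simp only [Matrix.diag, LinearMap.toMatrix_apply, PiLp.basisFun_apply, PiLp.basisFun_repr]

def gg (y : EE) : EE :=
  (-2 * y 0 * y 1 / (y 0 ^ 2 + y 1 ^ 2) ^ 2) • ee 0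
    + ((y 0 ^ 2 - y 1 ^ 2) / (y 0 ^ 2 + y 1 ^ 2) ^ 2) • ee 1

lemma gg_apply0 (y : EE) : gg y 0 = -2 * y 0 * y 1 / (y 0 ^ 2 + y 1 ^ 2) ^ 2 := by
  simp [gg, ee, EuclideanSpace.single_apply]

lemma gg_apply1 (y : EE) : gg y 1 = (y 0 ^ 2 - y 1 ^ 2) / (y 0 ^ 2 + y 1 ^ 2) ^ 2 := by
  simp [gg, ee, EuclideanSpace.single_apply]

lemma norm_gg (y : EE) (hy : 0 < y 0 ^ 2 + y 1 ^ 2) : ‖gg y‖ = (y 0 ^ 2 + y 1 ^ 2)⁻¹ := by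
  have hne : y 0 ^ 2 + y 1 ^ 2 ≠ 0 := ne_of_gt hy
  rw [EuclideanSpace.norm_eq]
  rw [Fin.sum_univ_two, gg_apply0, gg_apply1]
  rw [show ‖(-2 * y 0 * y 1 / (y 0 ^ 2 + y 1 ^ 2) ^ 2)‖ ^ 2
      + ‖((y 0 ^ 2 - y 1 ^ 2) / (y 0 ^ 2 + y 1 ^ 2) ^ 2)‖ ^ 2
      = ((y 0 ^ 2 + y 1 ^ 2)⁻¹) ^ 2 by
    rw [norm_eq_abs, norm_eq_abs, sq_abs, sq_abs]; field_simp; ring]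
  exact Real.sqrt_sq (by positivity)

lemma hasGrad_u (u : EE → ℝ) (hu : ∀ x : EE, u x = x 1 / (x 0 ^ 2 + x 1 ^ 2))
    (y : EE) (hy : 0 < y 0 ^ 2 + y 1 ^ 2) : HasGradientAt u (gg y) y := by
  have hy' : y 0 * y 0 + y 1 * y 1 ≠ 0 := by
    intro h; apply ne_of_gt hy; rw [← h]; ring
  rw [hasGradientAt_iff_hasFDerivAt]
  have h0 : HasFDerivAt (fun x : EE => x 0) (phi 0) y := (phi 0).hasFDerivAt
  have h1 : HasFDerivAt (fun x : EE => x 1) (phi 1) y := (phi 1).hasFDerivAt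
  have hR := (h0.mul h0).add (h1.mul h1)
  have hinv := (hasDerivAt_inv hy').comp_hasFDerivAt y hR
  have h := h1.mul hinv
  have heq : u = (fun x : EE => x 1 * (x 0 * x 0 + x 1 * x 1)⁻¹) := by
    funext z; rw [hu]; rw [div_eq_mul_inv]; ring_nf
  rw [heq]
  convert h using 1
  · rfl
  · funext v; simp
  ext v
  simp [gg, PiLp.inner_apply, Fin.sum_univ_two, EuclideanSpace.single_apply, smul_smul]
  field_simp
  ring

def VV1 (b : ℝ) (y : EE) : ℝ :=
  (-2 * y 0 * y 1 * ((y 0 * y 0 + y 1 * y 1) + b * (y 0 * y 0 - y 1 * y 1))) *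
    ((y 0 * y 0 + y 1 * y 1) * (y 0 * y 0 + y 1 * y 1) * (y 0 * y 0 + y 1 * y 1))⁻¹

def VV2 (b : ℝ) (y : EE) : ℝ :=
  (((y 0 * y 0 + y 1 * y 1) + b * (y 0 * y 0 - y 1 * y 1)) *
      ((y 0 * y 0 - y 1 * y 1) + b * (y 0 * y 0 + y 1 * y 1))) *
    ((y 0 * y 0 + y 1 * y 1) * (y 0 * y 0 + y 1 * y 1) * (y 0 * y 0 + y 1 * y 1))⁻¹

lemma grad_f_gg (b : ℝ) (f : EE → ℝ)
    (hgradf : ∀ η : EE, η ≠ 0 →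
      gradient f η = (‖η‖ + b * η 1) •
        (‖η‖⁻¹ • η + b • EuclideanSpace.single (1 : Fin 2) (1 : ℝ)))
    (y : EE) (hy : 0 < y 0 ^ 2 + y 1 ^ 2) :
    gradient f (gg y) = VV1 b y • ee 0 + VV2 b y • ee 1 := by
  have hR : (y 0 ^ 2 + y 1 ^ 2) ≠ 0 := ne_of_gt hy
  have hn := norm_gg y hy
  have hne : gg y ≠ 0 := by
    intro h
    rw [h, norm_zero] at hn
    exact hR (by simpa using hn.symm)
  rw [hgradf _ hne, hn]
  apply PiLp.ext
  intro i
  have hR' : y 0 * y 0 + y 1 * y 1 ≠ 0 := by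
    intro h; exact hR (by rw [← h]; ring)
  fin_cases i <;>
    simp only [gg, VV1, VV2, ee, PiLp.add_apply, PiLp.smul_apply, smul_eq_mul,
      EuclideanSpace.single_apply, Fin.isValue] <;>
    simp [EuclideanSpace.single_apply] <;>
    field_simp <;> ring

/-- for `b ∈ (-1,0)`, `f(η) = ½(|η| + b η₂)²` and
`u(x₁,x₂) = x₂/(x₁² + x₂²)`, the vector field `x ↦ ∇f(∇u(x))` has strictly positive
divergence at every point of the upper half-plane, i.e. `u` is a strict subsolution of
`∇·(∇f(∇u)) = 0` in `ℝ²₊`. -/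
theorem stmt19 (b : ℝ) (hb1 : -1 < b) (hb2 : b < 0)
    (f : EuclideanSpace ℝ (Fin 2) → ℝ)
    (hf : ∀ η : EuclideanSpace ℝ (Fin 2), f η = (1 / 2) * (‖η‖ + b * η 1) ^ 2)
    (hgradf : ∀ η : EuclideanSpace ℝ (Fin 2), η ≠ 0 →
      gradient f η = (‖η‖ + b * η 1) •
        (‖η‖⁻¹ • η + b • EuclideanSpace.single (1 : Fin 2) (1 : ℝ)))
    (u : EuclideanSpace ℝ (Fin 2) → ℝ)
    (hu : ∀ x : EuclideanSpace ℝ (Fin 2), u x = x 1 / (x 0 ^ 2 + x 1 ^ 2)) :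
    ∀ x : EuclideanSpace ℝ (Fin 2), 0 < x 1 →
      0 < vdiv (fun y => gradient f (gradient u y)) x := by
  intro x hx
  have hRpos : (0:ℝ) < x 0 ^ 2 + x 1 ^ 2 := by positivity
  -- eventual equality near x
  have hUopen : IsOpen {y : EE | 0 < y 1} :=
    isOpen_lt continuous_const (phi 1).continuous
  have hmem : {y : EE | 0 < y 1} ∈ nhds x := hUopen.mem_nhds hx
  have hEv : (fun y => gradient f (gradient u y)) =ᶠ[nhds x]
      (fun y : EE => VV1 b y • ee 0 + VV2 b y • ee 1) := by
    filter_upwards [hmem] with y hy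
    have hRy : 0 < y 0 ^ 2 + y 1 ^ 2 := by positivity
    rw [(hasGrad_u u hu y hRy).gradient, grad_f_gg b f hgradf y hRy]
  -- derivatives of VV1, VV2 at x
  have h0 : HasFDerivAt (fun y : EE => y 0) (phi 0) x := (phi 0).hasFDerivAt
  have h1 : HasFDerivAt (fun y : EE => y 1) (phi 1) x := (phi 1).hasFDerivAt
  have hA := h0.mul h0
  have hC := h1.mul h1
  have hRd := hA.add hC
  have hS := hA.sub hC
  have hden := (hRd.mul hRd).mul hRd
  have hdne : (x 0 * x 0 + x 1 * x 1) * (x 0 * x 0 + x 1 * x 1) * (x 0 * x 0 + x 1 * x 1) ≠ 0 := by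
    have : (0:ℝ) < x 0 * x 0 + x 1 * x 1 := by nlinarith
    positivity
  have hinv := (hasDerivAt_inv hdne).comp_hasFDerivAt x hden
  have hRS := hRd.add (hS.const_mul b)
  have hN1 := ((h0.const_mul (-2:ℝ)).mul h1).mul hRS
  have hN2 := hRS.mul (hS.add (hRd.const_mul b))
  have hW : HasFDerivAt (fun y : EE => VV1 b y • ee 0 + VV2 b y • ee 1) _ x :=
    ((hN1.mul hinv).smul_const (ee 0)).add ((hN2.mul hinv).smul_const (ee 1))
  -- compute the divergence
  simp only [vdiv]
  rw [hEv.fderiv_eq, hW.fderiv, traceEE]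
  have target : (0:ℝ) < -2 * b * x 1 * ((3 + 3*b) * x 0 ^ 2 + (1 - b) * x 1 ^ 2)
      / (x 0 ^ 2 + x 1 ^ 2) ^ 3 := by
    apply div_pos
    · have h1' : (0:ℝ) < -2 * b := by linarith
      have h2' : (0:ℝ) < (3 + 3*b) * x 0 ^ 2 + (1 - b) * x 1 ^ 2 := by nlinarith [sq_nonneg (x 0)]
      have := mul_pos (mul_pos h1' hx) h2'
      linarith [this]
    · positivity
  convert target using 1
  have hR' : x 0 * x 0 + x 1 * x 1 ≠ 0 := by nlinarith
  have hR'' : x 0 ^ 2 + x 1 ^ 2 ≠ 0 := ne_of_gt hRpos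
  simp only [ContinuousLinearMap.coe_coe, ContinuousLinearMap.add_apply,
    ContinuousLinearMap.smulRight_apply, ContinuousLinearMap.smul_apply,
    ContinuousLinearMap.sub_apply, PiLp.add_apply, PiLp.smul_apply, smul_eq_mul,
    phi_apply, EuclideanSpace.single_apply]
  simp [EuclideanSpace.single_apply]
  field_simp
  ring
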